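/- Let S be a TCK family generating 𝔖, and let 𝔖_0^k denote the WOT-closed ideal generated by {S_μ : |μ| = k}. If μ is a path with |μ| = n ≤ k, then S_μ* 𝔖_0^k ⊆ 𝔖_0^{k−n} (interpreting 𝔖_0^0 = 𝔖). In particular, every A ∈ 𝔖_0^k can be written A = Σ_{|λ|=k} S_λ A_λ (SOT-convergent) with A_λ = S_λ* A ∈ 𝔖, and this decomposition with A_λ = S_{s(λ)} A_λ is unique. -/

import Mathlib

structure DirectedGraph where
  V : Type
  E : Type
  src : E → V
  rng : E → V

namespace DirectedGraph

/-- Two edges are composable (as in `e₂ e₁`, `e₂` after `e₁`) when `s(e₂) = r(e₁)`. -/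
def Composable (G : DirectedGraph) (a b : G.E) : Prop := G.src a = G.rng b

/-- A list `[eₙ, …, e₁]` of edges is a path when consecutive edges are composable. -/
def IsPathList (G : DirectedGraph) (μ : List G.E) : Prop := List.Chain' G.Composable μ

/-- The path `μ` has source `v` (vacuous for the empty path). -/
def SrcIs (G : DirectedGraph) (μ : List G.E) (v : G.V) : Prop :=
  ∀ e ∈ μ.getLast?, G.src e = v

/-- The path `μ`, regarded as a path with source `v`, has range `w`. -/
def RngIs (G : DirectedGraph) (v : G.V) (μ : List G.E) (w : G.V) : Prop :=
  match μ with
  | [] => v = w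
  | e :: _ => G.rng e = w

/-- `μ` is a path with source `v`. -/
def IsPathAt (G : DirectedGraph) (v : G.V) (μ : List G.E) : Prop :=
  G.IsPathList μ ∧ G.SrcIs μ v

/-- `μ` is a cycle at `v` : a path with source and range `v`. -/
def IsCycleAt (G : DirectedGraph) (v : G.V) (μ : List G.E) : Prop :=
  G.IsPathAt v μ ∧ G.RngIs v μ v

end DirectedGraph

/-- A Toeplitz–Cuntz–Krieger family for the directed graph `G` on the Hilbert space `H`:
pairwise orthogonal projections `Sv v`, partial isometries `Se e` with
`(Se e)* (Se e) = Sv (s e)`, and `∑_{e ∈ F} (Se e)(Se e)* ≤ Sv v` for finite `F ⊆ r⁻¹(v)`. -/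
structure TCKFamily (G : DirectedGraph) (H : Type) [NormedAddCommGroup H]
    [InnerProductSpace ℂ H] [CompleteSpace H] where
  Sv : G.V → H →L[ℂ] H
  Se : G.E → H →L[ℂ] H
  sv_sa : ∀ v, IsSelfAdjoint (Sv v)
  sv_idem : ∀ v, Sv v * Sv v = Sv v
  sv_orth : ∀ v w, v ≠ w → Sv v * Sv w = 0
  se_isom : ∀ e, ContinuousLinearMap.adjoint (Se e) * Se e = Sv (G.src e)
  tck_ineq : ∀ (v : G.V) (F : Finset G.E), (∀ e ∈ F, G.rng e = v) →
    ContinuousLinearMap.IsPositive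
      (Sv v - ∑ e ∈ F, Se e * ContinuousLinearMap.adjoint (Se e))

/-- The operator associated to a path `μ` with source `v`: the product of the edge
operators along `μ`, with the convention that the empty path at `v` gives `Sv v`. -/
noncomputable def pathOp {G : DirectedGraph} {H : Type} [NormedAddCommGroup H]
    [InnerProductSpace ℂ H] [CompleteSpace H]
    (S : TCKFamily G H) (v : G.V) (μ : List G.E) : H →L[ℂ] H :=
  match μ with
  | [] => S.Sv v
  | e :: rest => (((e :: rest)).map S.Se).prod

/-- The closure of a set of operators in the weak operator topology, described
via the basic WOT neighbourhoods. -/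
def wotClosure {H : Type} [NormedAddCommGroup H] [InnerProductSpace ℂ H]
    (A : Set (H →L[ℂ] H)) : Set (H →L[ℂ] H) :=
  {T | ∀ (F : Finset (H × H)) (ε : ℝ), 0 < ε →
    ∃ X ∈ A, ∀ p ∈ F, ‖(@inner ℂ H _ ((T - X) p.1) p.2)‖ < ε}

/-- The (source-annotated) paths of `G` of length `k`. -/
def PathsLen (G : DirectedGraph) (k : ℕ) : Type :=
  {p : G.V × List G.E // G.IsPathAt p.1 p.2 ∧ p.2.length = k}

/-- `𝔖₀ᵏ` : the WOT-closed span of the path operators `S_λ` with `|λ| ≥ k`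
(for `k = 0` this is the free semigroupoid algebra `𝔖` itself). -/
noncomputable def SGAIdeal {H : Type} [NormedAddCommGroup H] [InnerProductSpace ℂ H]
    [CompleteSpace H] {G : DirectedGraph} (S : TCKFamily G H) (k : ℕ) :
    Set (H →L[ℂ] H) :=
  wotClosure (↑(Submodule.span ℂ {T : H →L[ℂ] H |
    ∃ (u : G.V) (lam : List G.E), G.IsPathAt u lam ∧ k ≤ lam.length ∧ T = pathOp S u lam}))


open ContinuousLinearMap
variable {H : Type} [NormedAddCommGroup H] [InnerProductSpace ℂ H] [CompleteSpace H]

local notation "⟪" x ", " y "⟫" => @inner ℂ _ _ x y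

lemma sa_adjoint {T : H →L[ℂ] H} (h : star T = T) : adjoint T = T := by
  rw [← star_eq_adjoint, h]

lemma sa_inner {T : H →L[ℂ] H} (h : star T = T) (a b : H) : ⟪T a, b⟫ = ⟪a, T b⟫ := by
  conv_lhs => rw [← sa_adjoint h]
  exact adjoint_inner_left T b a

lemma isom_TRT {T R : H →L[ℂ] H} (h : star T * T = R) (hsa : star R = R)
    (hid : R * R = R) : T * R = T := by
  have key : star (T * R - T) * (T * R - T) = 0 := by
    have h1 : star (T * R) = R * star T := by rw [star_mul, hsa]
    rw [star_sub, h1, sub_mul, mul_sub, mul_sub]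
    have e1 : R * star T * (T * R) = R := by
      rw [mul_assoc, ← mul_assoc (star T) T R, h, ← mul_assoc, hid, hid]
    have e2 : R * star T * T = R := by rw [mul_assoc, h, hid]
    have e3 : star T * (T * R) = R := by rw [← mul_assoc, h, hid]
    rw [e1, e2, e3, h]
    abel
  exact sub_eq_zero.mp ((CStarRing.star_mul_self_eq_zero_iff (T * R - T)).mp key)

lemma proj_re {R : H →L[ℂ] H} (hsa : star R = R) (hid : R * R = R) (x : H) :
    RCLike.re ⟪R x, x⟫ = ‖R x‖ ^ 2 := by
  have : ⟪R x, x⟫ = ⟪R x, R x⟫ := by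
    conv_lhs => rw [← hid, ContinuousLinearMap.mul_apply, sa_inner hsa]
  rw [this]
  exact inner_self_eq_norm_sq (𝕜 := ℂ) (R x)

lemma proj_norm_le {R : H →L[ℂ] H} (hsa : star R = R) (hid : R * R = R) (x : H) :
    ‖R x‖ ≤ ‖x‖ := by
  rcases eq_or_ne (R x) 0 with h | h
  · simp [h]
  have h1 : ‖R x‖ ^ 2 = RCLike.re ⟪R x, x⟫ := (proj_re hsa hid x).symm
  have h2 : RCLike.re ⟪R x, x⟫ ≤ ‖R x‖ * ‖x‖ := by
    calc RCLike.re ⟪R x, x⟫ ≤ ‖⟪R x, x⟫‖ := RCLike.re_le_norm _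
    _ ≤ ‖R x‖ * ‖x‖ := norm_inner_le_norm _ _
  have h3 : 0 < ‖R x‖ := norm_pos_iff.mpr h
  nlinarith

section TCK
variable {H : Type} [NormedAddCommGroup H] [InnerProductSpace ℂ H] [CompleteSpace H]
  {G : DirectedGraph} (S : TCKFamily G H)

lemma sv_star (v : G.V) : star (S.Sv v) = S.Sv v := (S.sv_sa v).star_eq

lemma se_star_se (e : G.E) : star (S.Se e) * S.Se e = S.Sv (G.src e) := by
  rw [star_eq_adjoint]; exact S.se_isom e

lemma se_sv (e : G.E) : S.Se e * S.Sv (G.src e) = S.Se e :=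
  isom_TRT (se_star_se S e) (sv_star S _) (S.sv_idem _)

lemma se_star_se_se (e : G.E) : S.Se e * star (S.Se e) * S.Se e = S.Se e := by
  rw [mul_assoc, se_star_se, se_sv]

/-- The range projection of an edge operator. -/
lemma range_proj_sa (e : G.E) : star (S.Se e * star (S.Se e)) = S.Se e * star (S.Se e) := by
  rw [star_mul, star_star]

lemma range_proj_idem (e : G.E) :
    (S.Se e * star (S.Se e)) * (S.Se e * star (S.Se e)) = S.Se e * star (S.Se e) := by
  rw [← mul_assoc, se_star_se_se]

lemma sv_rng_se (e : G.E) : S.Sv (G.rng e) * S.Se e = S.Se e := by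
  have hpos : ContinuousLinearMap.IsPositive
      (S.Sv (G.rng e) - S.Se e * star (S.Se e)) := by
    have := S.tck_ineq (G.rng e) {e} (by simp)
    simpa [star_eq_adjoint] using this
  have hproj1R : star (1 - S.Sv (G.rng e)) = 1 - S.Sv (G.rng e) := by
    rw [star_sub, star_one, sv_star]
  have hid1R : (1 - S.Sv (G.rng e)) * (1 - S.Sv (G.rng e)) = 1 - S.Sv (G.rng e) := by
    rw [sub_mul, mul_sub, mul_sub, one_mul, mul_one, one_mul, S.sv_idem]
    abel
  have key : (1 - S.Sv (G.rng e)) * (S.Se e * star (S.Se e)) = 0 := by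
    ext z
    set y := (S.Se e * star (S.Se e)) z with hy
    have h1 : ‖(1 - S.Sv (G.rng e)) y‖ ^ 2 = RCLike.re ⟪(1 - S.Sv (G.rng e)) y, y⟫ := by
      rw [← proj_re hproj1R hid1R y]
    have h2 : RCLike.re ⟪(1 - S.Sv (G.rng e)) y, y⟫ =
        ‖y‖ ^ 2 - RCLike.re ⟪S.Sv (G.rng e) y, y⟫ := by
      rw [ContinuousLinearMap.sub_apply, ContinuousLinearMap.one_apply,
        inner_sub_left, map_sub]
      congr 1
      exact inner_self_eq_norm_sq (𝕜 := ℂ) y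
    have h3 : ‖y‖ ^ 2 ≤ RCLike.re ⟪S.Sv (G.rng e) y, y⟫ := by
      have hp := hpos.inner_nonneg_left y
      rw [ContinuousLinearMap.sub_apply, inner_sub_left] at hp
      replace hp := (RCLike.le_iff_re_im.mp hp).1
      rw [map_zero, map_sub, sub_nonneg] at hp
      calc ‖y‖ ^ 2 = RCLike.re ⟪(S.Se e * star (S.Se e)) y, y⟫ := by
            rw [hy, ← ContinuousLinearMap.mul_apply, range_proj_idem,
              inner_self_eq_norm_sq (𝕜 := ℂ)]
        _ ≤ RCLike.re ⟪S.Sv (G.rng e) y, y⟫ := hp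
    have h5 : (1 - S.Sv (G.rng e)) y = 0 := by
      have h4 : ‖(1 - S.Sv (G.rng e)) y‖ ^ 2 ≤ 0 := by rw [h1, h2]; linarith
      have := sq_nonneg ‖(1 - S.Sv (G.rng e)) y‖
      have hn : ‖(1 - S.Sv (G.rng e)) y‖ = 0 := by nlinarith
      simpa using hn
    exact h5
  have hRP : S.Sv (G.rng e) * (S.Se e * star (S.Se e)) = S.Se e * star (S.Se e) := by
    rw [sub_mul, one_mul, sub_eq_zero] at key
    exact key.symm
  have hPSe : (S.Se e * star (S.Se e)) * S.Se e = S.Se e := se_star_se_se S e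
  have := congrArg (fun T => T * S.Se e) hRP
  simpa only [mul_assoc, hPSe] using this

lemma se_range_absorb (e : G.E) : (S.Se e * star (S.Se e)) * S.Se e = S.Se e :=
  se_star_se_se S e

lemma edge_orth {e f : G.E} (hef : e ≠ f) : star (S.Se e) * S.Se f = 0 := by
  classical
  by_cases hr : G.rng e = G.rng f
  · -- same range: use positivity with F = {e, f}
    have hpos := S.tck_ineq (G.rng e) {e, f} (by
      intro g hg
      rcases Finset.mem_insert.mp hg with h | h
      · rw [h]
      · rw [Finset.mem_singleton.mp h, hr])
    rw [Finset.sum_pair hef] at hpos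
    have hpos' : ContinuousLinearMap.IsPositive
        (S.Sv (G.rng e) - (S.Se e * star (S.Se e) + S.Se f * star (S.Se f))) := by
      simpa [star_eq_adjoint] using hpos
    have hQP : (S.Se f * star (S.Se f)) * (S.Se e * star (S.Se e)) = 0 := by
      ext z
      set y := (S.Se e * star (S.Se e)) z with hy
      have hPy : (S.Se e * star (S.Se e)) y = y := by
        rw [hy, ← ContinuousLinearMap.mul_apply, range_proj_idem]
      have hp := hpos'.inner_nonneg_left y
      rw [ContinuousLinearMap.sub_apply, inner_sub_left,
        ContinuousLinearMap.add_apply, inner_add_left] at hp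
      replace hp := (RCLike.le_iff_re_im.mp hp).1
      rw [map_zero, map_sub, sub_nonneg, map_add] at hp
      have h1 : RCLike.re ⟪(S.Se e * star (S.Se e)) y, y⟫ = ‖y‖ ^ 2 := by
        rw [hPy]; exact inner_self_eq_norm_sq (𝕜 := ℂ) y
      have h2 : RCLike.re ⟪(S.Se f * star (S.Se f)) y, y⟫ =
          ‖(S.Se f * star (S.Se f)) y‖ ^ 2 :=
        proj_re (range_proj_sa S f) (range_proj_idem S f) y
      have h3 : RCLike.re ⟪S.Sv (G.rng e) y, y⟫ ≤ ‖y‖ ^ 2 := by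
        calc RCLike.re ⟪S.Sv (G.rng e) y, y⟫ ≤ ‖⟪S.Sv (G.rng e) y, y⟫‖ :=
              RCLike.re_le_norm _
          _ ≤ ‖S.Sv (G.rng e) y‖ * ‖y‖ := norm_inner_le_norm _ _
          _ ≤ ‖y‖ * ‖y‖ := by
              have := proj_norm_le (sv_star S (G.rng e)) (S.sv_idem (G.rng e)) y
              exact mul_le_mul_of_nonneg_right this (norm_nonneg y)
          _ = ‖y‖ ^ 2 := (sq ‖y‖).symm
      have h4 : ‖(S.Se f * star (S.Se f)) y‖ ^ 2 ≤ 0 := by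
        rw [h1, h2] at hp; linarith
      have := sq_nonneg ‖(S.Se f * star (S.Se f)) y‖
      have hn : ‖(S.Se f * star (S.Se f)) y‖ = 0 := by nlinarith
      exact norm_eq_zero.mp hn
    have hPQ : (S.Se e * star (S.Se e)) * (S.Se f * star (S.Se f)) = 0 := by
      have := congrArg star hQP
      simpa [star_mul, star_star, mul_assoc] using this
    calc star (S.Se e) * S.Se f
        = star ((S.Se e * star (S.Se e)) * S.Se e) *
            ((S.Se f * star (S.Se f)) * S.Se f) := by rw [se_star_se_se, se_star_se_se]
      _ = star (S.Se e) * ((S.Se e * star (S.Se e)) * (S.Se f * star (S.Se f))) * S.Se f := by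
          rw [star_mul, range_proj_sa]
          noncomm_ring
      _ = 0 := by rw [hPQ]; simp
  · -- different ranges
    calc star (S.Se e) * S.Se f
        = star (S.Sv (G.rng e) * S.Se e) * (S.Sv (G.rng f) * S.Se f) := by
          rw [sv_rng_se, sv_rng_se]
      _ = star (S.Se e) * (S.Sv (G.rng e) * S.Sv (G.rng f)) * S.Se f := by
          rw [star_mul, sv_star]
          noncomm_ring
      _ = 0 := by rw [S.sv_orth _ _ hr]; simp

/-- The raw product of edge operators along a list. -/
noncomputable def Qop (S : TCKFamily G H) (l : List G.E) : H →L[ℂ] H :=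
  (l.map S.Se).prod

@[simp] lemma Qop_nil : Qop S ([] : List G.E) = 1 := rfl

lemma Qop_cons (e : G.E) (t : List G.E) : Qop S (e :: t) = S.Se e * Qop S t := by
  simp [Qop]

lemma Qop_append (a b : List G.E) : Qop S (a ++ b) = Qop S a * Qop S b := by
  simp [Qop]

lemma pathOp_nil (v : G.V) : pathOp S v [] = S.Sv v := rfl

lemma pathOp_eq_Qop {l : List G.E} (h : l ≠ []) (v : G.V) : pathOp S v l = Qop S l := by
  cases l with
  | nil => exact absurd rfl h
  | cons e t => rfl

lemma sv_rng_mul_Qop (e : G.E) (t : List G.E) :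
    S.Sv (G.rng e) * Qop S (e :: t) = Qop S (e :: t) := by
  rw [Qop_cons, ← mul_assoc, sv_rng_se]

lemma Qop_star_Qop : ∀ (t : List G.E) (e : G.E),
    List.Chain' G.Composable (e :: t) →
    star (Qop S (e :: t)) * Qop S (e :: t) =
      S.Sv (G.src ((e :: t).getLast (by simp))) := by
  intro t
  induction t with
  | nil =>
      intro e _
      rw [Qop_cons, Qop_nil, mul_one]
      simpa using se_star_se S e
  | cons f t' ih =>
      intro e hch
      have hcomp : G.Composable e f := (List.isChain_cons_cons.mp hch).1
      have hch' : List.Chain' G.Composable (f :: t') := (List.isChain_cons_cons.mp hch).2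
      have : star (Qop S (e :: f :: t')) * Qop S (e :: f :: t') =
          star (Qop S (f :: t')) * (star (S.Se e) * S.Se e) * Qop S (f :: t') := by
        rw [Qop_cons, star_mul]
        noncomm_ring
      rw [this, se_star_se, hcomp]
      rw [mul_assoc, sv_rng_mul_Qop, ih f hch']
      simp

lemma Qop_mul_sv {l : List G.E} (h : l ≠ []) (hch : List.Chain' G.Composable l) :
    Qop S l * S.Sv (G.src (l.getLast h)) = Qop S l := by
  cases l with
  | nil => exact absurd rfl h
  | cons e t =>
      exact isom_TRT (Qop_star_Qop S t e hch) (sv_star S _) (S.sv_idem _)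

lemma Qop_orth : ∀ (μ ν : List G.E), List.Chain' G.Composable μ →
    List.Chain' G.Composable ν → μ.length = ν.length → μ ≠ ν →
    star (Qop S μ) * Qop S ν = 0 := by
  intro μ
  induction μ with
  | nil =>
      intro ν _ _ hlen hne
      exact absurd (List.length_eq_zero_iff.mp hlen.symm).symm (by simpa using hne)
  | cons e t ih =>
      intro ν hμ hν hlen hne
      cases ν with
      | nil => simp at hlen
      | cons f s =>
          have hkey : star (Qop S (e :: t)) * Qop S (f :: s) =
              star (Qop S t) * (star (S.Se e) * S.Se f) * Qop S s := by
            rw [Qop_cons, Qop_cons, star_mul]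
            noncomm_ring
          by_cases hef : e = f
          · subst hef
            rw [hkey, se_star_se]
            have hts : t ≠ s := fun h => hne (by rw [h])
            have hlen' : t.length = s.length := by simpa using hlen
            cases s with
            | nil => exact absurd (List.length_eq_zero_iff.mp hlen') hts
            | cons g s' =>
                have hcomp : G.Composable e g := (List.isChain_cons_cons.mp hν).1
                rw [hcomp, mul_assoc, sv_rng_mul_Qop]
                exact ih (g :: s') hμ.tail hν.tail hlen' hts
          · rw [hkey, edge_orth S hef]
            simp

lemma srcIs_getLast {v : G.V} {l : List G.E} (h : G.SrcIs l v) (hne : l ≠ []) :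
    G.src (l.getLast hne) = v :=
  h (l.getLast hne) (by simp [List.getLast?_eq_getLast hne])

lemma pathOp_star_self (p : PathsLen G k) :
    star (pathOp S p.1.1 p.1.2) * pathOp S p.1.1 p.1.2 = S.Sv p.1.1 := by
  obtain ⟨⟨v, l⟩, hpath, hlen⟩ := p
  show star (pathOp S v l) * pathOp S v l = S.Sv v
  have hpath' : G.IsPathAt v l := hpath
  cases l with
  | nil => simp [pathOp_nil, sv_star, S.sv_idem]
  | cons e t =>
      have h := Qop_star_Qop S t e hpath'.1
      rw [pathOp_eq_Qop S (l := e :: t) (by simp) v, h,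
        srcIs_getLast hpath'.2 (by simp)]

lemma pathOp_mul_sv (p : PathsLen G k) :
    pathOp S p.1.1 p.1.2 * S.Sv p.1.1 = pathOp S p.1.1 p.1.2 :=
  isom_TRT (pathOp_star_self S p) (sv_star S _) (S.sv_idem _)

lemma pathOp_orth {k : ℕ} (p q : PathsLen G k) (hne : p ≠ q) :
    star (pathOp S p.1.1 p.1.2) * pathOp S q.1.1 q.1.2 = 0 := by
  obtain ⟨⟨vp, lp⟩, hp, hlp⟩ := p
  obtain ⟨⟨vq, lq⟩, hq, hlq⟩ := q
  show star (pathOp S vp lp) * pathOp S vq lq = 0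
  have hp' : G.IsPathAt vp lp := hp
  have hq' : G.IsPathAt vq lq := hq
  have hlp' : lp.length = k := hlp
  have hlq' : lq.length = k := hlq
  by_cases hl : lp = lq
  · subst hl
    cases lp with
    | nil =>
        have hv : vp ≠ vq := by
          intro h
          exact hne (by simp [h]; rfl)
        simp only [pathOp_nil]
        rw [sv_star]
        exact S.sv_orth _ _ hv
    | cons e t =>
        exfalso
        apply hne
        have h1 : G.src ((e :: t).getLast (by simp)) = vp := srcIs_getLast hp'.2 (by simp)
        have h2 : G.src ((e :: t).getLast (by simp)) = vq := srcIs_getLast hq'.2 (by simp)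
        simp [← h1, ← h2]
        rfl
  · have hnp : lp ≠ [] := by
      intro h
      subst h
      have h0 : lq.length = 0 := by simpa using hlq'.trans hlp'.symm
      exact hl (List.length_eq_zero_iff.mp h0).symm
    have hnq : lq ≠ [] := by
      intro h
      subst h
      have h0 : lp.length = 0 := by simpa using hlp'.trans hlq'.symm
      exact hl (List.length_eq_zero_iff.mp h0)
    rw [pathOp_eq_Qop S hnp vp, pathOp_eq_Qop S hnq vq]
    exact Qop_orth S lp lq hp'.1 hq'.1 (hlp'.trans hlq'.symm) hl

lemma pathOp_proj_sa (p : PathsLen G k) :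
    star (pathOp S p.1.1 p.1.2 * star (pathOp S p.1.1 p.1.2)) =
      pathOp S p.1.1 p.1.2 * star (pathOp S p.1.1 p.1.2) := by
  rw [star_mul, star_star]

lemma pathOp_proj_idem (p : PathsLen G k) :
    (pathOp S p.1.1 p.1.2 * star (pathOp S p.1.1 p.1.2)) *
      (pathOp S p.1.1 p.1.2 * star (pathOp S p.1.1 p.1.2)) =
      pathOp S p.1.1 p.1.2 * star (pathOp S p.1.1 p.1.2) := by
  have h1 : pathOp S p.1.1 p.1.2 * star (pathOp S p.1.1 p.1.2) * pathOp S p.1.1 p.1.2 =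
      pathOp S p.1.1 p.1.2 := by
    rw [mul_assoc, pathOp_star_self, pathOp_mul_sv]
  rw [← mul_assoc, h1]

lemma pathOp_TST (p : PathsLen G k) :
    pathOp S p.1.1 p.1.2 * star (pathOp S p.1.1 p.1.2) * pathOp S p.1.1 p.1.2 =
      pathOp S p.1.1 p.1.2 := by
  rw [mul_assoc, pathOp_star_self, pathOp_mul_sv]

lemma pathOp_proj_orth {k : ℕ} (p q : PathsLen G k) (hne : p ≠ q) :
    (pathOp S p.1.1 p.1.2 * star (pathOp S p.1.1 p.1.2)) *
      (pathOp S q.1.1 q.1.2 * star (pathOp S q.1.1 q.1.2)) = 0 := by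
  have : pathOp S p.1.1 p.1.2 * (star (pathOp S p.1.1 p.1.2) * pathOp S q.1.1 q.1.2) *
      star (pathOp S q.1.1 q.1.2) =
      (pathOp S p.1.1 p.1.2 * star (pathOp S p.1.1 p.1.2)) *
      (pathOp S q.1.1 q.1.2 * star (pathOp S q.1.1 q.1.2)) := by noncomm_ring
  rw [← this, pathOp_orth S p q hne]
  simp

/-- The generating set of `𝔖₀ᵏ`. -/
def GenSet (S : TCKFamily G H) (k : ℕ) : Set (H →L[ℂ] H) :=
  {T : H →L[ℂ] H | ∃ (u : G.V) (lam : List G.E),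
    G.IsPathAt u lam ∧ k ≤ lam.length ∧ T = pathOp S u lam}

lemma SGAIdeal_eq (k : ℕ) :
    SGAIdeal S k = wotClosure ↑(Submodule.span ℂ (GenSet S k)) := rfl

/-- Any generator of `𝔖₀ᵏ` factors through a path of length exactly `k`. -/
lemma gen_factor {k : ℕ} {T : H →L[ℂ] H} (hT : T ∈ GenSet S k) :
    ∃ (p : PathsLen G k) (R : H →L[ℂ] H), T = pathOp S p.1.1 p.1.2 * R := by
  obtain ⟨u, lam, hpath, hk, rfl⟩ := hT
  cases lam with
  | nil =>
      have hk0 : k = 0 := Nat.le_zero.mp hk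
      subst hk0
      refine ⟨⟨(u, []), ⟨hpath, rfl⟩⟩, S.Sv u, ?_⟩
      show pathOp S u [] = pathOp S u [] * S.Sv u
      rw [pathOp_nil, S.sv_idem]
  | cons e t =>
      cases k with
      | zero =>
          refine ⟨⟨(G.rng e, []), ⟨⟨List.isChain_nil, by intro x hx; simp at hx⟩, rfl⟩⟩,
            Qop S (e :: t), ?_⟩
          show pathOp S u (e :: t) = pathOp S (G.rng e) [] * Qop S (e :: t)
          rw [pathOp_eq_Qop S (by simp) u, pathOp_nil, sv_rng_mul_Qop]
      | succ m =>
          have hk' : m + 1 ≤ (e :: t).length := hk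
          have htake : ((e :: t).take (m + 1)).length = m + 1 := by
            rw [List.length_take]
            exact min_eq_left hk'
          have htne : (e :: t).take (m + 1) ≠ [] := by
            intro h
            rw [h] at htake
            simp at htake
          have hchain : List.Chain' G.Composable ((e :: t).take (m + 1)) :=
            hpath.1.prefix (List.take_prefix _ _)
          refine ⟨⟨(G.src (((e :: t).take (m + 1)).getLast htne), (e :: t).take (m + 1)),
            ⟨⟨hchain, ?_⟩, htake⟩⟩, Qop S ((e :: t).drop (m + 1)), ?_⟩
          · intro x hx
            rw [List.getLast?_eq_getLast htne, Option.mem_some_iff] at hx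
            exact (congrArg G.src hx).symm
          · show pathOp S u (e :: t) = pathOp S _ ((e :: t).take (m + 1)) * _
            rw [pathOp_eq_Qop S (by simp) u, pathOp_eq_Qop S htne,
              ← Qop_append, List.take_append_drop]

/-- Compressing a generator of `𝔖₀ᵏ` by a path of length `n ≤ k` lands in the
generators of `𝔖₀^{k-n}` (or vanishes). -/
lemma adj_gen {k n : ℕ} (hnk : n ≤ k) {v : G.V} {μ : List G.E}
    (hμ : G.IsPathAt v μ) (hμn : μ.length = n) {T : H →L[ℂ] H} (hT : T ∈ GenSet S k) :
    star (pathOp S v μ) * T = 0 ∨ star (pathOp S v μ) * T ∈ GenSet S (k - n) := by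
  obtain ⟨u, lam, hpath, hk, rfl⟩ := hT
  cases μ with
  | nil =>
      -- `pathOp` is the vertex projection
      have hn0 : n = 0 := by simpa using hμn.symm
      subst hn0
      rw [pathOp_nil, sv_star]
      cases lam with
      | nil =>
          rw [pathOp_nil]
          by_cases hv : v = u
          · subst hv
            right
            rw [S.sv_idem]
            exact ⟨v, [], hpath, by simpa using hk, rfl⟩
          · left
            exact S.sv_orth _ _ hv
      | cons e t =>
          rw [pathOp_eq_Qop S (by simp) u]
          by_cases hv : v = G.rng e
          · subst hv
            right
            rw [sv_rng_mul_Qop]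
            exact ⟨u, e :: t, hpath, by simpa using hk, (pathOp_eq_Qop S (by simp) u).symm⟩
          · left
            rw [← sv_rng_mul_Qop S e t, ← mul_assoc, S.sv_orth _ _ hv, zero_mul]
  | cons e₀ t₀ =>
      -- μ is nonempty, hence so is lam
      have hn1 : 1 ≤ n := by rw [← hμn]; simp
      have hlam : lam ≠ [] := by
        intro h
        rw [h] at hk
        simp at hk
        omega
      have hnlam : n ≤ lam.length := le_trans hnk hk
      have htake : (lam.take n).length = n := by
        rw [List.length_take]; exact min_eq_left hnlam
      have hchaintake : List.Chain' G.Composable (lam.take n) :=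
        hpath.1.prefix (List.take_prefix _ _)
      rw [pathOp_eq_Qop S (by simp) v, pathOp_eq_Qop S hlam u]
      by_cases hpre : (e₀ :: t₀) = lam.take n
      · -- μ is the length-n prefix of lam
        have hQ : Qop S lam = Qop S (e₀ :: t₀) * Qop S (lam.drop n) := by
          rw [← Qop_append, hpre, List.take_append_drop]
        rw [hQ, ← mul_assoc, Qop_star_Qop S t₀ e₀ hμ.1]
        rcases hdrop : lam.drop n with _ | ⟨f, s⟩
        · -- lam = μ, so k = n
          have hlen : lam.length ≤ n := List.drop_eq_nil_iff.mp hdrop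
          have hkn : k = n := le_antisymm (le_trans hk hlen) hnk
          right
          rw [Qop_nil, mul_one]
          refine ⟨G.src ((e₀ :: t₀).getLast (by simp)), [],
            ⟨List.isChain_nil, by intro x hx; simp at hx⟩, by omega, (pathOp_nil _ _).symm⟩
        · -- lam strictly longer than μ
          have hjunction : G.Composable ((e₀ :: t₀).getLast (by simp)) f := by
            have h0 : List.Chain' G.Composable (lam.take n ++ lam.drop n) := by
              rw [List.take_append_drop]
              exact hpath.1
            replace h0 := List.isChain_append.mp h0
            apply h0.2.2
            · rw [← hpre, List.getLast?_eq_getLast (by simp)]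
              rfl
            · rw [hdrop]; rfl
          rw [hjunction, sv_rng_mul_Qop]
          right
          have hchaindrop : List.Chain' G.Composable (f :: s) := by
            rw [← hdrop]
            exact hpath.1.suffix ⟨lam.take n, List.take_append_drop n lam⟩
          refine ⟨G.src ((f :: s).getLast (by simp)), f :: s,
            ⟨hchaindrop, ?_⟩, ?_, (pathOp_eq_Qop S (by simp) _).symm⟩
          · intro x hx
            rw [List.getLast?_eq_getLast (by simp), Option.mem_some_iff] at hx
            exact (congrArg G.src hx).symm
          · have : (f :: s).length = lam.length - n := by
              rw [← hdrop, List.length_drop]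
            rw [this]
            exact Nat.sub_le_sub_right hk n
      · -- μ is not a prefix: orthogonality
        left
        have hQ : Qop S lam = Qop S (lam.take n) * Qop S (lam.drop n) := by
          rw [← Qop_append, List.take_append_drop]
        rw [hQ, ← mul_assoc,
          Qop_orth S (e₀ :: t₀) (lam.take n) hμ.1 hchaintake (by rw [hμn, htake]) hpre,
          zero_mul]

lemma adj_span {k n : ℕ} (hnk : n ≤ k) {v : G.V} {μ : List G.E}
    (hμ : G.IsPathAt v μ) (hμn : μ.length = n) {X : H →L[ℂ] H}
    (hX : X ∈ Submodule.span ℂ (GenSet S k)) :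
    star (pathOp S v μ) * X ∈ Submodule.span ℂ (GenSet S (k - n)) := by
  induction hX using Submodule.span_induction with
  | mem T hT =>
      rcases adj_gen S hnk hμ hμn hT with h | h
      · rw [h]; exact Submodule.zero_mem _
      · exact Submodule.subset_span h
  | zero => rw [mul_zero]; exact Submodule.zero_mem _
  | add a b _ _ ha hb => rw [mul_add]; exact Submodule.add_mem _ ha hb
  | smul c a _ ha => rw [mul_smul_comm]; exact Submodule.smul_mem _ c ha

lemma wot_mul {T A : H →L[ℂ] H} {W W' : Submodule ℂ (H →L[ℂ] H)}
    (hA : A ∈ wotClosure (W : Set (H →L[ℂ] H)))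
    (h : ∀ X ∈ W, T * X ∈ W') : T * A ∈ wotClosure (W' : Set (H →L[ℂ] H)) := by
  classical
  intro F ε hε
  obtain ⟨X, hX, hb⟩ := hA (F.image fun p => (p.1, ContinuousLinearMap.adjoint T p.2)) ε hε
  refine ⟨T * X, h X hX, ?_⟩
  intro p hp
  have hmem := hb (p.1, ContinuousLinearMap.adjoint T p.2)
    (Finset.mem_image_of_mem _ hp)
  have heq : (@inner ℂ H _ ((T * A - T * X) p.1) p.2) =
      (@inner ℂ H _ ((A - X) p.1) (ContinuousLinearMap.adjoint T p.2)) := by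
    rw [ContinuousLinearMap.sub_apply, ContinuousLinearMap.sub_apply,
      ContinuousLinearMap.mul_apply, ContinuousLinearMap.mul_apply, ← map_sub,
      ContinuousLinearMap.adjoint_inner_right]
  rw [heq]
  exact hmem

lemma main1 {k n : ℕ} (hnk : n ≤ k) {v : G.V} {μ : List G.E}
    (hμ : G.IsPathAt v μ) (hμn : μ.length = n) {A : H →L[ℂ] H}
    (hA : A ∈ SGAIdeal S k) :
    ContinuousLinearMap.adjoint (pathOp S v μ) * A ∈ SGAIdeal S (k - n) := by
  rw [← ContinuousLinearMap.star_eq_adjoint]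
  exact wot_mul hA (fun X hX => adj_span S hnk hμ hμn hX)

lemma ann {k : ℕ} {A : H →L[ℂ] H} (hA : A ∈ SGAIdeal S k) {y : H}
    (hy : ∀ p : PathsLen G k, ContinuousLinearMap.adjoint (pathOp S p.1.1 p.1.2) y = 0)
    (x : H) : (@inner ℂ H _ y (A x)) = 0 := by
  classical
  have hspan : ∀ X ∈ Submodule.span ℂ (GenSet S k), (@inner ℂ H _ y (X x)) = 0 := by
    intro X hX
    induction hX using Submodule.span_induction with
    | mem T hT =>
        obtain ⟨p, R, rfl⟩ := gen_factor S hT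
        have : (pathOp S p.1.1 p.1.2 * R) x = pathOp S p.1.1 p.1.2 (R x) := rfl
        rw [this, ← ContinuousLinearMap.adjoint_inner_left, hy p, inner_zero_left]
    | zero => simp
    | add a b _ _ ha hb => rw [ContinuousLinearMap.add_apply, inner_add_right, ha, hb, add_zero]
    | smul c a _ ha => rw [ContinuousLinearMap.smul_apply, inner_smul_right, ha, mul_zero]
  by_contra hc
  have hcpos : 0 < ‖(@inner ℂ H _ y (A x))‖ := norm_pos_iff.mpr hc
  obtain ⟨X, hX, hb⟩ := hA {(x, y)} _ hcpos
  have hb' := hb (x, y) (Finset.mem_singleton_self _)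
  have h1 : (@inner ℂ H _ ((A - X) x) y) = (@inner ℂ H _ (A x) y) := by
    rw [ContinuousLinearMap.sub_apply, inner_sub_left]
    have h2 : (@inner ℂ H _ (X x) y) = 0 := by
      rw [← inner_conj_symm, hspan X hX, map_zero]
    rw [h2, sub_zero]
  rw [h1] at hb'
  rw [← inner_conj_symm] at hb'
  simp only [RCLike.norm_conj] at hb'
  exact lt_irrefl _ hb'

lemma sum_proj_sa {k : ℕ} (F : Finset (PathsLen G k)) :
    star (∑ p ∈ F, pathOp S p.1.1 p.1.2 * star (pathOp S p.1.1 p.1.2)) =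
      ∑ p ∈ F, pathOp S p.1.1 p.1.2 * star (pathOp S p.1.1 p.1.2) := by
  rw [star_sum]
  exact Finset.sum_congr rfl fun p _ => pathOp_proj_sa S p

lemma sum_proj_idem {k : ℕ} (F : Finset (PathsLen G k)) :
    (∑ p ∈ F, pathOp S p.1.1 p.1.2 * star (pathOp S p.1.1 p.1.2)) *
      (∑ p ∈ F, pathOp S p.1.1 p.1.2 * star (pathOp S p.1.1 p.1.2)) =
      ∑ p ∈ F, pathOp S p.1.1 p.1.2 * star (pathOp S p.1.1 p.1.2) := by
  classical
  rw [Finset.sum_mul_sum]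
  rw [Finset.sum_congr rfl (fun p hp => Finset.sum_eq_single_of_mem p hp
    (fun q hq hqp => pathOp_proj_orth S p q (Ne.symm hqp)))]
  exact Finset.sum_congr rfl fun p _ => pathOp_proj_idem S p

lemma sum_proj_norm {k : ℕ} (F : Finset (PathsLen G k)) (z : H) :
    ∑ p ∈ F, ‖(pathOp S p.1.1 p.1.2 * star (pathOp S p.1.1 p.1.2)) z‖ ^ 2 =
      ‖(∑ p ∈ F, pathOp S p.1.1 p.1.2 * star (pathOp S p.1.1 p.1.2)) z‖ ^ 2 := by
  rw [← proj_re (sum_proj_sa S F) (sum_proj_idem S F) z]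
  rw [ContinuousLinearMap.sum_apply, sum_inner, map_sum]
  exact Finset.sum_congr rfl fun p _ => (proj_re (pathOp_proj_sa S p) (pathOp_proj_idem S p) z).symm

lemma sum_proj_norm_le {k : ℕ} (F : Finset (PathsLen G k)) (z : H) :
    ∑ p ∈ F, ‖(pathOp S p.1.1 p.1.2 * star (pathOp S p.1.1 p.1.2)) z‖ ^ 2 ≤ ‖z‖ ^ 2 := by
  rw [sum_proj_norm]
  have h := proj_norm_le (sum_proj_sa S F) (sum_proj_idem S F) z
  exact pow_le_pow_left₀ (norm_nonneg _) h 2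

lemma summable_proj {k : ℕ} (z : H) :
    Summable (fun p : PathsLen G k =>
      (pathOp S p.1.1 p.1.2 * star (pathOp S p.1.1 p.1.2)) z) := by
  have hsq : Summable (fun p : PathsLen G k =>
      ‖(pathOp S p.1.1 p.1.2 * star (pathOp S p.1.1 p.1.2)) z‖ ^ 2) :=
    summable_of_sum_le (fun p => sq_nonneg _) (fun F => sum_proj_norm_le S F z)
  rw [summable_iff_vanishing]
  intro e he
  obtain ⟨ε, hε, hball⟩ := Metric.mem_nhds_iff.mp he
  have hsq' := summable_iff_vanishing.mp hsq (Metric.ball 0 (ε ^ 2))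
    (Metric.ball_mem_nhds 0 (by positivity))
  obtain ⟨s, hs⟩ := hsq'
  refine ⟨s, fun t ht => ?_⟩
  have h1 := hs t ht
  rw [Metric.mem_ball, Real.dist_eq, sub_zero] at h1
  have h2 : ∑ p ∈ t, ‖(pathOp S p.1.1 p.1.2 * star (pathOp S p.1.1 p.1.2)) z‖ ^ 2 < ε ^ 2 :=
    lt_of_abs_lt h1
  have h3 : ‖∑ p ∈ t, (pathOp S p.1.1 p.1.2 * star (pathOp S p.1.1 p.1.2)) z‖ ^ 2 < ε ^ 2 := by
    rw [← ContinuousLinearMap.sum_apply, ← sum_proj_norm S t z]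
    exact h2
  have h4 : ‖∑ p ∈ t, (pathOp S p.1.1 p.1.2 * star (pathOp S p.1.1 p.1.2)) z‖ < ε :=
    lt_of_pow_lt_pow_left₀ 2 (le_of_lt hε) h3
  exact hball (Metric.mem_ball.mpr (by rwa [dist_zero_right]))

/-- The central SOT decomposition: for `A ∈ 𝔖₀ᵏ`,
`A x = ∑_{|λ|=k} S_λ S_λ* A x`. -/
lemma star_comp_proj_self {k : ℕ} (p : PathsLen G k) :
    star (pathOp S p.1.1 p.1.2) * (pathOp S p.1.1 p.1.2 * star (pathOp S p.1.1 p.1.2)) =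
      star (pathOp S p.1.1 p.1.2) := by
  rw [← mul_assoc, pathOp_star_self]
  conv_lhs => rw [← sv_star]
  rw [← star_mul, pathOp_mul_sv]

lemma star_comp_proj_other {k : ℕ} (p q : PathsLen G k) (hqp : q ≠ p) :
    star (pathOp S p.1.1 p.1.2) * (pathOp S q.1.1 q.1.2 * star (pathOp S q.1.1 q.1.2)) = 0 := by
  rw [← mul_assoc, pathOp_orth S p q (Ne.symm hqp), zero_mul]

lemma main_sum {k : ℕ} {A : H →L[ℂ] H} (hA : A ∈ SGAIdeal S k) (x : H) :
    HasSum (fun p : PathsLen G k =>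
      pathOp S p.1.1 p.1.2 ((ContinuousLinearMap.adjoint (pathOp S p.1.1 p.1.2) * A) x))
      (A x) := by
  classical
  have hfun : (fun p : PathsLen G k =>
      pathOp S p.1.1 p.1.2 ((ContinuousLinearMap.adjoint (pathOp S p.1.1 p.1.2) * A) x)) =
      fun p : PathsLen G k =>
        (pathOp S p.1.1 p.1.2 * star (pathOp S p.1.1 p.1.2)) (A x) := by
    funext p
    rw [ContinuousLinearMap.star_eq_adjoint]
    rfl
  rw [hfun]
  obtain ⟨z', hz'⟩ := summable_proj S (k := k) (A x)
  have hPz' : ∀ p : PathsLen G k,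
      star (pathOp S p.1.1 p.1.2) z' = star (pathOp S p.1.1 p.1.2) (A x) := by
    intro p
    have hmap := hz'.mapL
      ((star (pathOp S p.1.1 p.1.2) : H →L[ℂ] H))
    have hone : HasSum (fun q : PathsLen G k =>
        (star (pathOp S p.1.1 p.1.2) : H →L[ℂ] H)
          ((pathOp S q.1.1 q.1.2 * star (pathOp S q.1.1 q.1.2)) (A x)))
        ((star (pathOp S p.1.1 p.1.2) : H →L[ℂ] H) (A x)) := by
      have hterm : ∀ q : PathsLen G k, q ≠ p →
          (star (pathOp S p.1.1 p.1.2) : H →L[ℂ] H)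
            ((pathOp S q.1.1 q.1.2 * star (pathOp S q.1.1 q.1.2)) (A x)) = 0 := by
        intro q hq
        rw [← ContinuousLinearMap.mul_apply, star_comp_proj_other S p q hq]
        rfl
      have hat : (star (pathOp S p.1.1 p.1.2) : H →L[ℂ] H)
          ((pathOp S p.1.1 p.1.2 * star (pathOp S p.1.1 p.1.2)) (A x)) =
          (star (pathOp S p.1.1 p.1.2) : H →L[ℂ] H) (A x) := by
        rw [← ContinuousLinearMap.mul_apply, star_comp_proj_self]
      have := hasSum_single (f := fun q : PathsLen G k =>
          (star (pathOp S p.1.1 p.1.2) : H →L[ℂ] H)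
            ((pathOp S q.1.1 q.1.2 * star (pathOp S q.1.1 q.1.2)) (A x))) p hterm
      beta_reduce at this
      rwa [hat] at this
    exact hmap.unique hone
  have hPw : ∀ p : PathsLen G k,
      ContinuousLinearMap.adjoint (pathOp S p.1.1 p.1.2) (A x - z') = 0 := by
    intro p
    rw [← ContinuousLinearMap.star_eq_adjoint, map_sub, hPz' p, sub_self]
  have hwz : (@inner ℂ H _ (A x - z') (A x)) = 0 := ann S hA hPw x
  have hwz' : (@inner ℂ H _ (A x - z') z') = 0 := by
    have hmap := hz'.mapL (innerSL ℂ (A x - z'))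
    have hzero : (fun q : PathsLen G k =>
        (innerSL ℂ (A x - z'))
          ((pathOp S q.1.1 q.1.2 * star (pathOp S q.1.1 q.1.2)) (A x))) =
        fun _ : PathsLen G k => (0 : ℂ) := by
      funext q
      show (@inner ℂ H _ (A x - z')
        ((pathOp S q.1.1 q.1.2 * star (pathOp S q.1.1 q.1.2)) (A x))) = 0
      have hq : (pathOp S q.1.1 q.1.2 * star (pathOp S q.1.1 q.1.2)) (A x) =
          pathOp S q.1.1 q.1.2 (ContinuousLinearMap.adjoint (pathOp S q.1.1 q.1.2) (A x)) := by
        rw [ContinuousLinearMap.star_eq_adjoint]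
        rfl
      rw [hq, ← ContinuousLinearMap.adjoint_inner_left, hPw q, inner_zero_left]
    rw [hzero] at hmap
    exact hmap.unique hasSum_zero
  have hw : A x - z' = 0 := by
    have h0 : (@inner ℂ H _ (A x - z') (A x - z')) = 0 := by
      rw [inner_sub_right, hwz, hwz', sub_zero]
    exact inner_self_eq_zero.mp h0
  have hz'' : z' = A x := by
    have := sub_eq_zero.mp hw
    exact this.symm
  rwa [hz''] at hz'

lemma main_unique {k : ℕ} {A : H →L[ℂ] H} (B : PathsLen G k → H →L[ℂ] H)
    (hB : ∀ p, S.Sv p.1.1 * B p = B p)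
    (hsum : ∀ x : H, HasSum (fun p : PathsLen G k => pathOp S p.1.1 p.1.2 (B p x)) (A x))
    (p : PathsLen G k) : B p = ContinuousLinearMap.adjoint (pathOp S p.1.1 p.1.2) * A := by
  ext x
  have hmap := (hsum x).mapL ((star (pathOp S p.1.1 p.1.2) : H →L[ℂ] H))
  have hterm : ∀ q : PathsLen G k, q ≠ p →
      (star (pathOp S p.1.1 p.1.2) : H →L[ℂ] H) (pathOp S q.1.1 q.1.2 (B q x)) = 0 := by
    intro q hq
    rw [← ContinuousLinearMap.mul_apply, pathOp_orth S p q (Ne.symm hq)]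
    rfl
  have hat : (star (pathOp S p.1.1 p.1.2) : H →L[ℂ] H) (pathOp S p.1.1 p.1.2 (B p x)) =
      B p x := by
    rw [← ContinuousLinearMap.mul_apply, pathOp_star_self]
    calc S.Sv p.1.1 (B p x) = (S.Sv p.1.1 * B p) x := rfl
      _ = B p x := by rw [hB p]
  have hone := hasSum_single (f := fun q : PathsLen G k =>
      (star (pathOp S p.1.1 p.1.2) : H →L[ℂ] H) (pathOp S q.1.1 q.1.2 (B q x))) p hterm
  beta_reduce at hone
  rw [hat] at hone
  have hun := hmap.unique hone
  calc B p x = (star (pathOp S p.1.1 p.1.2) : H →L[ℂ] H) (A x) := hun.symm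
    _ = (ContinuousLinearMap.adjoint (pathOp S p.1.1 p.1.2) * A) x := by
        rw [ContinuousLinearMap.star_eq_adjoint]
        rfl

end TCK

/-- For a nondegenerate TCK family `S` and `n ≤ k`:
`S_μ* 𝔖₀ᵏ ⊆ 𝔖₀^{k−n}` for every path `μ` with `|μ| = n`.  In particular every
`A ∈ 𝔖₀ᵏ` can be written as the SOT-convergent sum `A = ∑_{|λ|=k} S_λ A_λ` with
`A_λ = S_λ* A ∈ 𝔖`, and this decomposition subject to `A_λ = S_{s(λ)} A_λ` is
unique. -/
theorem stmt8 {H : Type} [NormedAddCommGroup H] [InnerProductSpace ℂ H] [CompleteSpace H]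
    (G : DirectedGraph) (S : TCKFamily G H)
    (hnd : ∀ x : H, (∀ v, S.Sv v x = 0) → x = 0)
    (k n : ℕ) (hnk : n ≤ k) :
    (∀ (v : G.V) (μ : List G.E), G.IsPathAt v μ → μ.length = n →
      ∀ A ∈ SGAIdeal S k,
        ContinuousLinearMap.adjoint (pathOp S v μ) * A ∈ SGAIdeal S (k - n)) ∧
    (∀ A ∈ SGAIdeal S k,
      (∀ p : PathsLen G k,
        ContinuousLinearMap.adjoint (pathOp S p.1.1 p.1.2) * A ∈ SGAIdeal S 0) ∧
      (∀ x : H, HasSum (fun p : PathsLen G k =>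
        pathOp S p.1.1 p.1.2
          ((ContinuousLinearMap.adjoint (pathOp S p.1.1 p.1.2) * A) x)) (A x)) ∧
      (∀ B : PathsLen G k → H →L[ℂ] H,
        (∀ p, S.Sv p.1.1 * B p = B p) →
        (∀ x : H, HasSum (fun p : PathsLen G k => pathOp S p.1.1 p.1.2 (B p x)) (A x)) →
        ∀ p, B p = ContinuousLinearMap.adjoint (pathOp S p.1.1 p.1.2) * A)) := by
  constructor
  · intro v μ hμ hlen A hA
    exact main1 S hnk hμ hlen hA
  · intro A hA
    refine ⟨?_, fun x => main_sum S hA x, fun B hB hsum p => main_unique S B hB hsum p⟩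
    intro p
    have h := main1 S (le_refl k) p.2.1 p.2.2 hA
    rwa [Nat.sub_self] at h
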